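/- arXiv:2509.01281 — 2 statements merged into one kernel-verified Lean document; each statement's English description precedes it below -/
import Mathlib

section
/- For a density operator ρ and density operator σ with tr(ρσ) = 0, the trace distance satisfies ‖ρ − σ‖₁ = 2; conversely, if ‖ρ − σ‖₁ = 2 then tr(ρσ) = 0. Consequently, μ_{ρ,M}(1) = (1/2) · min{ ‖ρ − σ‖_M : σ a density operator with tr(ρσ) = 0 }. -/
open Matrix
open scoped ComplexOrder

namespace QSVQDH

variable {d : ℕ}

noncomputable def _root_.Matrix.PosSemidef.sqrt {A : Matrix (Fin d) (Fin d) ℂ}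
    (hA : A.PosSemidef) : Matrix (Fin d) (Fin d) ℂ :=
  hA.1.eigenvectorUnitary.1 * diagonal (((↑) : ℝ → ℂ) ∘ (√·) ∘ hA.1.eigenvalues) *
    (star hA.1.eigenvectorUnitary : Matrix (Fin d) (Fin d) ℂ)

open scoped MatrixOrder in
lemma _root_.Matrix.PosSemidef.sqrt_eq_cfc {A : Matrix (Fin d) (Fin d) ℂ}
    (hA : A.PosSemidef) : hA.sqrt = CFC.sqrt A := by
  rw [CFC.sqrt_eq_cfc, cfc_nnreal_eq_real _ A hA.nonneg, hA.1.cfc_eq]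
  have hf : (fun x : ℝ => ((NNReal.sqrt x.toNNReal : ℝ))) = fun x => √x := by
    funext x; rw [Real.sqrt]
  rw [hf]
  rfl

open scoped MatrixOrder in
lemma _root_.Matrix.PosSemidef.posSemidef_sqrt {A : Matrix (Fin d) (Fin d) ℂ}
    (hA : A.PosSemidef) : hA.sqrt.PosSemidef := by
  rw [hA.sqrt_eq_cfc]; exact (CFC.sqrt_nonneg A).posSemidef

open scoped MatrixOrder in
lemma _root_.Matrix.PosSemidef.sqrt_mul_self {A : Matrix (Fin d) (Fin d) ℂ}
    (hA : A.PosSemidef) : hA.sqrt * hA.sqrt = A := by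
  rw [hA.sqrt_eq_cfc]; exact CFC.sqrt_mul_sqrt_self A hA.nonneg

open scoped MatrixOrder in
lemma _root_.Matrix.PosSemidef.eq_sqrt_of_sq_eq {A B : Matrix (Fin d) (Fin d) ℂ}
    (hA : A.PosSemidef) (hB : B.PosSemidef) (hAB : A ^ 2 = B) : A = hB.sqrt := by
  rw [hB.sqrt_eq_cfc]; exact (CFC.sqrt_unique (by rw [← sq]; exact hAB) hA.nonneg).symm

/-- Schatten 1-norm (trace norm). -/
noncomputable def trNorm (A : Matrix (Fin d) (Fin d) ℂ) : ℝ :=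
  ((Matrix.posSemidef_conjTranspose_mul_self A).1.eigenvectorUnitary.1 *
    diagonal (((↑) : ℝ → ℂ) ∘ (√·) ∘ (Matrix.posSemidef_conjTranspose_mul_self A).1.eigenvalues) *
    (star (Matrix.posSemidef_conjTranspose_mul_self A).1.eigenvectorUnitary :
      Matrix (Fin d) (Fin d) ℂ)).trace.re

lemma trNorm_eq (A : Matrix (Fin d) (Fin d) ℂ) :
    trNorm A = ((Matrix.posSemidef_conjTranspose_mul_self A).sqrt).trace.re := rfl

/-- Schatten 2-norm (Hilbert–Schmidt norm). -/
noncomputable def hsNorm (A : Matrix (Fin d) (Fin d) ℂ) : ℝ :=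
  Real.sqrt ((Aᴴ * A).trace.re)

/-- Operator norm. -/
noncomputable def opNorm (A : Matrix (Fin d) (Fin d) ℂ) : ℝ :=
  ‖Matrix.toEuclideanCLM (𝕜 := ℂ) A‖

/-- Density operator: positive semidefinite with unit trace. -/
def IsDensity (ρ : Matrix (Fin d) (Fin d) ℂ) : Prop := ρ.PosSemidef ∧ ρ.trace = 1

/-- POVM element: 0 ≤ M ≤ I. -/
def IsPOVMElem (M : Matrix (Fin d) (Fin d) ℂ) : Prop := M.PosSemidef ∧ (1 - M).PosSemidef

/-- A measurement class of binary effects: contains 0, consists of POVM elements,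
is convex, and is closed under M ↦ I − M. -/
def IsMClass (Mset : Set (Matrix (Fin d) (Fin d) ℂ)) : Prop :=
  0 ∈ Mset ∧ (∀ M ∈ Mset, IsPOVMElem M) ∧ Convex ℝ Mset ∧ (∀ M ∈ Mset, 1 - M ∈ Mset)

/-- The M-seminorm ‖Δ‖_M = sup_{M ∈ Mset} (2 tr(MΔ) − tr Δ). -/
noncomputable def Mnorm (Mset : Set (Matrix (Fin d) (Fin d) ℂ))
    (Δ : Matrix (Fin d) (Fin d) ℂ) : ℝ :=
  sSup ((fun M => 2 * (M * Δ).trace.re - Δ.trace.re) '' Mset)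

/-- The ε-distinguishability ratio μ_{ρ,M}(ε). -/
noncomputable def mu (Mset : Set (Matrix (Fin d) (Fin d) ℂ))
    (ρ : Matrix (Fin d) (Fin d) ℂ) (ε : ℝ) : ℝ :=
  (1 / (2 * ε)) *
    sInf ((fun σ => Mnorm Mset (ρ - σ)) '' {σ | IsDensity σ ∧ 2 * ε ≤ trNorm (ρ - σ)})

/-- The ε-visibility γ_{V,M}(ε), where the subspace V is given by its
orthogonal projector P. -/
noncomputable def gamma (Mset : Set (Matrix (Fin d) (Fin d) ℂ))
    (P : Matrix (Fin d) (Fin d) ℂ) (ε : ℝ) : ℝ :=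
  (1 / ε) * sSup ((fun Ω =>
      sInf ((fun p : Matrix (Fin d) (Fin d) ℂ × Matrix (Fin d) (Fin d) ℂ =>
          (Ω * (p.1 - p.2)).trace.re) ''
        {p | IsDensity p.1 ∧ P * p.1 = p.1 ∧ IsDensity p.2 ∧ (p.2 * P).trace.re ≤ 1 - ε}))
    '' Mset)

/-- The ε-visibility in its minimax (minimum) form. -/
noncomputable def gammaMin (Mset : Set (Matrix (Fin d) (Fin d) ℂ))
    (P : Matrix (Fin d) (Fin d) ℂ) (ε : ℝ) : ℝ :=
  sInf ((fun p : Matrix (Fin d) (Fin d) ℂ × Matrix (Fin d) (Fin d) ℂ =>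
      (1 / (2 * ε)) * Mnorm Mset (p.1 - p.2)) ''
    {p | IsDensity p.1 ∧ P * p.1 = p.1 ∧ IsDensity p.2 ∧ (p.2 * P).trace.re ≤ 1 - ε})

/-- μ_{ρ,M}(1), defined through perfectly distinguishable (orthogonal) counterparts. -/
noncomputable def muone (Mset : Set (Matrix (Fin d) (Fin d) ℂ))
    (ρ : Matrix (Fin d) (Fin d) ℂ) : ℝ :=
  (1 / 2) * sInf ((fun σ => Mnorm Mset (ρ - σ)) '' {σ | IsDensity σ ∧ (ρ * σ).trace = 0})

/-- The distinguishability ratio μ̂_{ρ,M}. -/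
noncomputable def muhat (Mset : Set (Matrix (Fin d) (Fin d) ℂ))
    (ρ : Matrix (Fin d) (Fin d) ℂ) : ℝ :=
  sInf ((fun σ => Mnorm Mset (ρ - σ) / trNorm (ρ - σ)) '' {σ | IsDensity σ ∧ σ ≠ ρ})

variable {A : Matrix (Fin d) (Fin d) ℂ}

lemma cfc_mul (hA : A.IsHermitian) (f g : ℝ → ℝ) :
    hA.cfc f * hA.cfc g = hA.cfc (fun x => f x * g x) := by
  unfold Matrix.IsHermitian.cfc
  simp only [Unitary.conjStarAlgAut_apply]
  have h1 : (star (hA.eigenvectorUnitary : Matrix (Fin d) (Fin d) ℂ)) *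
      (hA.eigenvectorUnitary : Matrix (Fin d) (Fin d) ℂ) = 1 :=
    Unitary.star_mul_self_of_mem hA.eigenvectorUnitary.2
  have h2 : ∀ a b c e f g : Matrix (Fin d) (Fin d) ℂ,
      (a * b * c) * (e * f * g) = a * (b * (c * e) * f) * g := by
    intros; simp only [mul_assoc]
  rw [h2, h1, mul_one, diagonal_mul_diagonal]
  have h3 : (fun i => (RCLike.ofReal ∘ f ∘ hA.eigenvalues) i *
        (RCLike.ofReal ∘ g ∘ hA.eigenvalues) i : Fin d → ℂ) =
      RCLike.ofReal ∘ (fun x => f x * g x) ∘ hA.eigenvalues := by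
    funext i; simp [Function.comp_apply, RCLike.ofReal_mul]
  rw [h3]

lemma cfc_add (hA : A.IsHermitian) (f g : ℝ → ℝ) :
    hA.cfc f + hA.cfc g = hA.cfc (fun x => f x + g x) := by
  unfold Matrix.IsHermitian.cfc
  simp only [Unitary.conjStarAlgAut_apply]
  rw [← add_mul, ← mul_add, diagonal_add]
  have h3 : (fun i => (RCLike.ofReal ∘ f ∘ hA.eigenvalues) i +
        (RCLike.ofReal ∘ g ∘ hA.eigenvalues) i : Fin d → ℂ) =
      RCLike.ofReal ∘ (fun x => f x + g x) ∘ hA.eigenvalues := by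
    funext i; simp [Function.comp_apply, RCLike.ofReal_add]
  rw [h3]

lemma cfc_id (hA : A.IsHermitian) : hA.cfc (fun x => x) = A := by
  conv_rhs => rw [hA.spectral_theorem]
  rfl

lemma cfc_herm (hA : A.IsHermitian) (f : ℝ → ℝ) : (hA.cfc f).IsHermitian := by
  have hD : star (diagonal (RCLike.ofReal ∘ f ∘ hA.eigenvalues) : Matrix (Fin d) (Fin d) ℂ)
      = diagonal (RCLike.ofReal ∘ f ∘ hA.eigenvalues) := by
    rw [star_eq_conjTranspose, diagonal_conjTranspose]
    have : star (RCLike.ofReal ∘ f ∘ hA.eigenvalues : Fin d → ℂ) =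
        RCLike.ofReal ∘ f ∘ hA.eigenvalues := by
      funext i; simp [Pi.star_def, Function.comp_apply, RCLike.star_def, RCLike.conj_ofReal]
    rw [this]
  show (hA.cfc f)ᴴ = hA.cfc f
  rw [← star_eq_conjTranspose]
  unfold Matrix.IsHermitian.cfc
  simp only [Unitary.conjStarAlgAut_apply]
  simp only [StarMul.star_mul, star_star, hD, mul_assoc]

lemma cfc_psd (hA : A.IsHermitian) (f : ℝ → ℝ) (hf : ∀ x, 0 ≤ f x) :
    (hA.cfc f).PosSemidef := by
  have hfx : (fun x => Real.sqrt (f x) * Real.sqrt (f x)) = f :=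
    funext fun x => Real.mul_self_sqrt (hf x)
  have h1 : hA.cfc (fun x => Real.sqrt (f x)) * hA.cfc (fun x => Real.sqrt (f x)) =
      hA.cfc f := by rw [cfc_mul, hfx]
  have h2 := posSemidef_conjTranspose_mul_self (hA.cfc fun x => Real.sqrt (f x))
  rwa [(cfc_herm hA _).eq, h1] at h2

lemma cfc_trace (hA : A.IsHermitian) (f : ℝ → ℝ) :
    (hA.cfc f).trace = ∑ i, (f (hA.eigenvalues i) : ℂ) := by
  unfold Matrix.IsHermitian.cfc
  simp only [Unitary.conjStarAlgAut_apply]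
  rw [Matrix.trace_mul_cycle, Unitary.star_mul_self_of_mem hA.eigenvectorUnitary.2,
    one_mul, trace_diagonal]
  rfl

lemma trace_re_conjTranspose_mul_self (B : Matrix (Fin d) (Fin d) ℂ) :
    (Bᴴ * B).trace.re = ∑ i, ∑ j, Complex.normSq (B j i) := by
  simp only [Matrix.trace, Matrix.diag, Matrix.mul_apply, Matrix.conjTranspose_apply,
    Complex.re_sum]
  simp [Complex.star_def, ← Complex.normSq_eq_conj_mul_self]

lemma psd_trace_re_nonneg (hA : A.PosSemidef) : 0 ≤ A.trace.re := by
  have h : A = hA.sqrtᴴ * hA.sqrt := by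
    rw [hA.posSemidef_sqrt.1.eq, hA.sqrt_mul_self]
  rw [h, trace_re_conjTranspose_mul_self]
  exact Finset.sum_nonneg fun i _ => Finset.sum_nonneg fun j _ => Complex.normSq_nonneg _

lemma psd_eq_zero_of_trace (hA : A.PosSemidef) (h : A.trace.re = 0) : A = 0 := by
  have hsq : A = hA.sqrtᴴ * hA.sqrt := by
    rw [hA.posSemidef_sqrt.1.eq, hA.sqrt_mul_self]
  rw [hsq, trace_re_conjTranspose_mul_self] at h
  have hz : hA.sqrt = 0 := by
    ext i j
    have := (Finset.sum_eq_zero_iff_of_nonneg (fun i _ => Finset.sum_nonneg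
      (fun j _ => Complex.normSq_nonneg _))).mp h j (Finset.mem_univ _)
    have := (Finset.sum_eq_zero_iff_of_nonneg
      (fun j _ => Complex.normSq_nonneg _)).mp this i (Finset.mem_univ _)
    simpa using Complex.normSq_eq_zero.mp this
  rw [hsq, hz]
  simp

section main
variable {ρ σ : Matrix (Fin d) (Fin d) ℂ}

lemma mul_eq_zero_of_trace_orth (hρ : ρ.PosSemidef) (hσ : σ.PosSemidef)
    (h : (ρ * σ).trace = 0) : ρ * σ = 0 := by
  obtain ⟨B, hBh, hBB⟩ : ∃ B : Matrix (Fin d) (Fin d) ℂ, Bᴴ = B ∧ B * B = ρ :=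
    ⟨hρ.sqrt, hρ.posSemidef_sqrt.1.eq, hρ.sqrt_mul_self⟩
  obtain ⟨C, hCh, hCC⟩ : ∃ C : Matrix (Fin d) (Fin d) ℂ, Cᴴ = C ∧ C * C = σ :=
    ⟨hσ.sqrt, hσ.posSemidef_sqrt.1.eq, hσ.sqrt_mul_self⟩
  have hM : (B * σ * B).trace = 0 := by
    rw [mul_assoc, trace_mul_comm, mul_assoc, hBB, trace_mul_comm, h]
  have hMpsd : (B * σ * B).PosSemidef := by
    have := hσ.mul_mul_conjTranspose_same B
    rwa [hBh] at this
  have hM0 : B * σ * B = 0 := psd_eq_zero_of_trace hMpsd (by rw [hM]; rfl)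
  have hCB : C * B = 0 := by
    rw [← conjTranspose_mul_self_eq_zero (A := C * B), conjTranspose_mul, hCh, hBh]
    calc B * C * (C * B) = B * (C * C) * B := by simp only [mul_assoc]
    _ = 0 := by rw [hCC, hM0]
  have hσρ : σ * ρ = 0 := by
    rw [← hCC, ← hBB]
    calc C * C * (B * B) = C * (C * B) * B := by simp only [mul_assoc]
    _ = 0 := by rw [hCB]; simp
  calc ρ * σ = (σ * ρ)ᴴ := by rw [conjTranspose_mul, hρ.1.eq, hσ.1.eq]
  _ = 0 := by rw [hσρ]; simp

lemma trNorm_eq_two_of_orth (hρ : IsDensity ρ) (hσ : IsDensity σ)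
    (h : (ρ * σ).trace = 0) : trNorm (ρ - σ) = 2 := by
  have hρσ : ρ * σ = 0 := mul_eq_zero_of_trace_orth hρ.1 hσ.1 h
  have hσρ : σ * ρ = 0 := by
    calc σ * ρ = (ρ * σ)ᴴ := by rw [conjTranspose_mul, hρ.1.1.eq, hσ.1.1.eq]
    _ = 0 := by rw [hρσ]; simp
  have hadd : (ρ + σ).PosSemidef := hρ.1.add hσ.1
  have hsq : (ρ + σ) ^ 2 = (ρ - σ)ᴴ * (ρ - σ) := by
    rw [conjTranspose_sub, hρ.1.1.eq, hσ.1.1.eq, pow_two]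
    rw [mul_add, add_mul, add_mul, mul_sub, sub_mul, sub_mul, hρσ, hσρ]
    abel
  have hsqrt := hadd.eq_sqrt_of_sq_eq (posSemidef_conjTranspose_mul_self (ρ - σ)) hsq
  rw [trNorm_eq, ← hsqrt, trace_add, hρ.2, hσ.2]
  norm_num

lemma trNorm_le_two_and (hρ : IsDensity ρ) (hσ : IsDensity σ) :
    trNorm (ρ - σ) ≤ 2 ∧ (trNorm (ρ - σ) = 2 → (ρ * σ).trace = 0) := by
  have hΔ : (ρ - σ).IsHermitian := hρ.1.1.sub hσ.1.1
  -- trace norm via |Δ|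
  have habs : (posSemidef_conjTranspose_mul_self (ρ - σ)).sqrt =
      hΔ.cfc (fun x => |x|) := by
    refine ((cfc_psd hΔ _ fun x => abs_nonneg x).eq_sqrt_of_sq_eq
      (posSemidef_conjTranspose_mul_self (ρ - σ)) ?_).symm
    rw [pow_two, cfc_mul]
    have h1 : (fun x => |x| * |x|) = fun x : ℝ => x * x :=
      funext fun x => abs_mul_abs_self x
    rw [h1, ← cfc_mul hΔ (fun x => x) (fun x => x), cfc_id, hΔ.eq]
  have htr : trNorm (ρ - σ) = (hΔ.cfc (fun x => |x|)).trace.re := by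
    rw [trNorm_eq, habs]
  -- positive/negative parts
  have hpm : hΔ.cfc (fun x => max x 0) + hΔ.cfc (fun x => max (-x) 0) =
      hΔ.cfc (fun x => |x|) := by
    have e : (fun x : ℝ => max x 0 + max (-x) 0) = fun x : ℝ => |x| := by
      funext x
      rcases le_total 0 x with h | h
      · rw [max_eq_left h, max_eq_right (by linarith), add_zero, abs_of_nonneg h]
      · rw [max_eq_right h, max_eq_left (by linarith), zero_add, abs_of_nonpos h]
    rw [cfc_add, e]
  have hid : hΔ.cfc (fun x => max (-x) 0) + hΔ.cfc (fun x => x) =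
      hΔ.cfc (fun x => max x 0) := by
    have e : (fun x : ℝ => max (-x) 0 + x) = fun x : ℝ => max x 0 := by
      funext x
      rcases le_total 0 x with h | h
      · rw [max_eq_right (by linarith), max_eq_left h, zero_add]
      · rw [max_eq_left (by linarith), max_eq_right h]; ring
    rw [cfc_add, e]
  set P := hΔ.cfc (fun x => if 0 < x then (1:ℝ) else 0) with hPdef
  have hPh : Pᴴ = P := (cfc_herm hΔ _).eq
  have hPP2 : P * P = P := by
    have e : (fun x : ℝ => (if 0 < x then (1:ℝ) else 0) * (if 0 < x then (1:ℝ) else 0)) =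
        fun x : ℝ => if 0 < x then (1:ℝ) else 0 := by
      funext x; split_ifs <;> ring
    rw [hPdef, cfc_mul, e]
  have hPP : P * (ρ - σ) * P = hΔ.cfc (fun x => max x 0) := by
    conv_lhs => rw [← cfc_id hΔ]
    have e : (fun x : ℝ => (if 0 < x then (1:ℝ) else 0) * x * (if 0 < x then (1:ℝ) else 0)) =
        fun x : ℝ => max x 0 := by
      funext x
      split_ifs with h
      · rw [one_mul, mul_one, max_eq_left h.le]
      · push_neg at h
        rw [max_eq_right h]; ring
    rw [hPdef, cfc_mul, cfc_mul, e]
  have h1Ph : (1 - P)ᴴ = 1 - P := by rw [conjTranspose_sub, conjTranspose_one, hPh]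
  have hPsd1 : ((1 - P) * ρ * (1 - P)).PosSemidef := by
    have := hρ.1.mul_mul_conjTranspose_same (1 - P)
    rwa [h1Ph] at this
  have hPsd2 : (P * σ * P).PosSemidef := by
    have := hσ.1.mul_mul_conjTranspose_same P
    rwa [hPh] at this
  have htrPρ : (P * ρ * P).trace = (ρ * P).trace := by
    rw [trace_mul_cycle, hPP2, trace_mul_comm]
  have hexp1 : ((1 - P) * ρ * (1 - P)).trace = ρ.trace - (P * ρ * P).trace := by
    have e : (1 - P) * ρ * (1 - P) = ρ - P * ρ - ρ * P + P * ρ * P := by noncomm_ring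
    rw [e, trace_add, trace_sub, trace_sub, htrPρ, trace_mul_comm P ρ]
    ring
  set x := (P * ρ * P).trace.re with hxdef
  set y := (P * σ * P).trace.re with hydef
  set a := (hΔ.cfc (fun x => max x 0)).trace.re with hadef
  set b := (hΔ.cfc (fun x => max (-x) 0)).trace.re with hbdef
  have hρ1 : ρ.trace.re = 1 := by rw [hρ.2]; rfl
  have hσ1 : σ.trace.re = 1 := by rw [hσ.2]; rfl
  have hx1 : x ≤ 1 := by
    have h0 := psd_trace_re_nonneg hPsd1
    rw [hexp1, Complex.sub_re, hρ1] at h0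
    linarith
  have hy0 : 0 ≤ y := psd_trace_re_nonneg hPsd2
  have haxy : a = x - y := by
    have e : P * (ρ - σ) * P = P * ρ * P - P * σ * P := by noncomm_ring
    rw [hadef, ← hPP, e, trace_sub, Complex.sub_re]
  have hab : a = b := by
    have h0 : (ρ - σ).trace = 0 := by rw [trace_sub, hρ.2, hσ.2, sub_self]
    have := congrArg (fun M => M.trace.re) hid
    simp only [trace_add, Complex.add_re, cfc_id] at this
    rw [h0] at this
    simpa [hadef, hbdef] using this.symm
  have htrab : trNorm (ρ - σ) = a + b := by
    rw [htr, ← hpm, trace_add, Complex.add_re]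
  have ha1 : a ≤ 1 := by rw [haxy]; linarith
  constructor
  · rw [htrab, ← hab]; linarith
  · intro h2
    rw [htrab, ← hab] at h2
    have hax : a = 1 := by linarith
    have hxx : x = 1 := by rw [haxy] at hax; linarith
    have hyy : y = 0 := by rw [haxy] at hax; linarith
    -- σ * P = 0
    have hPσP : P * σ * P = 0 := psd_eq_zero_of_trace hPsd2 hyy
    obtain ⟨C, hCh, hCC⟩ : ∃ C : Matrix (Fin d) (Fin d) ℂ, Cᴴ = C ∧ C * C = σ :=
      ⟨hσ.1.sqrt, hσ.1.posSemidef_sqrt.1.eq, hσ.1.sqrt_mul_self⟩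
    have hCP : C * P = 0 := by
      rw [← conjTranspose_mul_self_eq_zero (A := C * P), conjTranspose_mul, hCh, hPh]
      calc P * C * (C * P) = P * (C * C) * P := by simp only [mul_assoc]
      _ = 0 := by rw [hCC, hPσP]
    have hσP : σ * P = 0 := by
      rw [← hCC, mul_assoc, hCP, mul_zero]
    -- ρ * (1 - P) = 0
    have htr1 : ((1 - P) * ρ * (1 - P)).trace.re = 0 := by
      rw [hexp1, Complex.sub_re, hρ1, ← hxdef, hxx, sub_self]
    have h1P0 : (1 - P) * ρ * (1 - P) = 0 := psd_eq_zero_of_trace hPsd1 htr1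
    obtain ⟨B, hBh, hBB⟩ : ∃ B : Matrix (Fin d) (Fin d) ℂ, Bᴴ = B ∧ B * B = ρ :=
      ⟨hρ.1.sqrt, hρ.1.posSemidef_sqrt.1.eq, hρ.1.sqrt_mul_self⟩
    have hBP : B * (1 - P) = 0 := by
      rw [← conjTranspose_mul_self_eq_zero (A := B * (1 - P)), conjTranspose_mul, hBh, h1Ph]
      calc (1 - P) * B * (B * (1 - P)) = (1 - P) * (B * B) * (1 - P) := by
            simp only [mul_assoc]
      _ = 0 := by rw [hBB, h1P0]
    have hρP : ρ = ρ * P := by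
      have : ρ * (1 - P) = 0 := by rw [← hBB, mul_assoc, hBP, mul_zero]
      rw [mul_sub, mul_one, sub_eq_zero] at this
      exact this
    have hPσ : P * σ = 0 := by
      have := congrArg conjTranspose hσP
      rwa [conjTranspose_mul, hPh, hσ.1.1.eq, conjTranspose_zero] at this
    rw [hρP, mul_assoc, hPσ, mul_zero, trace_zero]

end main

/-- tr(ρσ) = 0 iff ‖ρ − σ‖₁ = 2, and consequently
μ_{ρ,M}(1) = (1/2) min{‖ρ − σ‖_M : σ density, tr(ρσ) = 0}. -/
theorem trace_orthogonal_iff_and_mu_one (Mset : Set (Matrix (Fin d) (Fin d) ℂ))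
    (hM : IsMClass Mset) (ρ : Matrix (Fin d) (Fin d) ℂ) (hρ : IsDensity ρ)
    (hex : ∃ σ, IsDensity σ ∧ (ρ * σ).trace = 0) :
    (∀ σ : Matrix (Fin d) (Fin d) ℂ, IsDensity σ →
        ((ρ * σ).trace = 0 ↔ trNorm (ρ - σ) = 2)) ∧
      mu Mset ρ 1 =
        (1 / 2) * sInf ((fun σ => Mnorm Mset (ρ - σ)) ''
          {σ | IsDensity σ ∧ (ρ * σ).trace = 0})    := by
  have hiff : ∀ σ : Matrix (Fin d) (Fin d) ℂ, IsDensity σ →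
      ((ρ * σ).trace = 0 ↔ trNorm (ρ - σ) = 2) := fun σ hσ =>
    ⟨trNorm_eq_two_of_orth hρ hσ, (trNorm_le_two_and hρ hσ).2⟩
  refine ⟨hiff, ?_⟩
  unfold mu
  have hset : {σ : Matrix (Fin d) (Fin d) ℂ | IsDensity σ ∧ 2 * 1 ≤ trNorm (ρ - σ)} =
      {σ : Matrix (Fin d) (Fin d) ℂ | IsDensity σ ∧ (ρ * σ).trace = 0} := by
    ext σ
    simp only [Set.mem_setOf_eq]
    constructor
    · rintro ⟨h1, h2⟩
      refine ⟨h1, (hiff σ h1).mpr (le_antisymm (trNorm_le_two_and hρ h1).1 ?_)⟩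
      linarith
    · rintro ⟨h1, h2⟩
      refine ⟨h1, ?_⟩
      rw [(hiff σ h1).mp h2]
      norm_num
  rw [hset]
  norm_num


end QSVQDH
end

section
/- Let V be a subspace, 0 ≤ Ω ≤ I, and s, ε ∈ (0,1). If min over density operators ρ with range(ρ) ⊆ V and σ with tr(σ Π_V) ≤ 1 − ε of tr(Ω(ρ − σ)) exceeds ε·s, then the off-diagonal block Δ₁ = (I − Π_V) Ω Π_V satisfies ‖Δ₁‖_∞ < (1/2)·√(ε/(1−ε)). -/
open Matrix
open scoped ComplexOrder

namespace QSVQDH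

variable {d : ℕ}

lemma trace_mul_vecMulVec (M : Matrix (Fin d) (Fin d) ℂ) (v w : Fin d → ℂ) :
    (M * vecMulVec v w).trace = w ⬝ᵥ (M *ᵥ v) := by
  simp only [Matrix.trace, Matrix.diag, Matrix.mul_apply, vecMulVec_apply, dotProduct,
    mulVec, Finset.mul_sum]
  congr 1; ext i; congr 1; ext j; ring

lemma trace_vecMulVec_mul (M : Matrix (Fin d) (Fin d) ℂ) (v w : Fin d → ℂ) :
    (vecMulVec v w * M).trace = w ⬝ᵥ (M *ᵥ v) := by
  rw [Matrix.trace_mul_comm, trace_mul_vecMulVec]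

lemma mul_vecMulVec (M : Matrix (Fin d) (Fin d) ℂ) (v w : Fin d → ℂ) :
    M * vecMulVec v w = vecMulVec (M *ᵥ v) w := by
  ext i j
  simp only [Matrix.mul_apply, vecMulVec_apply, mulVec, dotProduct, Finset.sum_mul]
  congr 1; ext k; ring

lemma trace_vecMulVec (v w : Fin d → ℂ) : (vecMulVec v w).trace = v ⬝ᵥ w := by
  simp [Matrix.trace, Matrix.diag, vecMulVec_apply, dotProduct]

lemma dot_adjoint (A : Matrix (Fin d) (Fin d) ℂ) (x y : Fin d → ℂ) :
    star (A *ᵥ x) ⬝ᵥ y = star x ⬝ᵥ (Aᴴ *ᵥ y) := by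
  rw [star_mulVec, ← Matrix.dotProduct_mulVec]

lemma vecMulVec_posSemidef (v : Fin d → ℂ) : (vecMulVec v (star v)).PosSemidef := by
  refine .of_dotProduct_mulVec_nonneg ?_ ?_
  · ext i j
    simp [vecMulVec_apply, Matrix.conjTranspose_apply, mul_comm]
  · intro x
    have : star x ⬝ᵥ (vecMulVec v (star v) *ᵥ x) = star (star v ⬝ᵥ x) * (star v ⬝ᵥ x) := by
      simp only [mulVec, dotProduct, vecMulVec_apply, star_sum, star_mul', Pi.star_apply,
        star_star, Finset.mul_sum, Finset.sum_mul]
      rw [Finset.sum_comm]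
      refine Finset.sum_congr rfl fun i _ => ?_
      refine Finset.sum_congr rfl fun j _ => ?_
      ring
    rw [this]
    exact star_mul_self_nonneg _

lemma dot_star_self_eq (v : Fin d → ℂ) :
    star v ⬝ᵥ v = ((‖(WithLp.equiv 2 (Fin d → ℂ)).symm v‖ : ℝ) : ℂ) ^ 2 := by
  rw [dotProduct_comm, ← EuclideanSpace.inner_toLp_toLp, inner_self_eq_norm_sq_to_K]
  norm_cast

lemma key_unit (P Ω : Matrix (Fin d) (Fin d) ℂ)
    (hP : P.IsHermitian) (hΩ : IsPOVMElem Ω) (s ε : ℝ)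
    (hs : s ∈ Set.Ioo (0:ℝ) 1) (hε : ε ∈ Set.Ioo (0:ℝ) 1)
    (hmin : ∀ ρ σ : Matrix (Fin d) (Fin d) ℂ, IsDensity ρ → P * ρ = ρ →
      IsDensity σ → (σ * P).trace.re ≤ 1 - ε → ε * s < (Ω * (ρ - σ)).trace.re)
    (ψ φp : Fin d → ℂ) (hψ1 : star ψ ⬝ᵥ ψ = 1) (hφ1 : star φp ⬝ᵥ φp = 1)
    (hPψ : P *ᵥ ψ = ψ) (hPφ : P *ᵥ φp = 0) :
    ‖star φp ⬝ᵥ (Ω *ᵥ ψ)‖ ≤ ((1 - s) / 2) * Real.sqrt (ε / (1 - ε)) := by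
  obtain ⟨hs0, hs1⟩ := hs
  obtain ⟨hε0, hε1⟩ := hε
  have hε1' : (0:ℝ) < 1 - ε := by linarith
  have hrhs0 : 0 ≤ ((1 - s) / 2) * Real.sqrt (ε / (1 - ε)) := by
    apply mul_nonneg (by linarith) (Real.sqrt_nonneg _)
  set z : ℂ := star φp ⬝ᵥ (Ω *ᵥ ψ) with hzdef
  by_cases hz : z = 0
  · rw [hz]; simpa using hrhs0
  have habsz : (0:ℝ) < ‖z‖ := norm_pos_iff.mpr hz
  have hzabsC : ((‖z‖ : ℝ) : ℂ) ≠ 0 := by exact_mod_cast habsz.ne'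
  set a : ℝ := Real.sqrt (1 - ε) with hadef
  have ha0 : 0 < a := Real.sqrt_pos.mpr hε1'
  have ha2 : (a:ℂ)^2 = ((1 - ε : ℝ) : ℂ) := by
    rw [← Complex.ofReal_pow, Real.sq_sqrt hε1'.le]
  set c : ℂ := (Real.sqrt ε : ℂ) * z / ((‖z‖ : ℝ) : ℂ) with hcdef
  have hcz : c * star z = ((Real.sqrt ε * ‖z‖ : ℝ) : ℂ) := by
    rw [hcdef, Complex.star_def, div_mul_eq_mul_div, mul_assoc, Complex.mul_conj,
      Complex.normSq_eq_norm_sq]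
    push_cast
    field_simp
  have hcc : star c * c = ((ε : ℝ) : ℂ) := by
    rw [Complex.star_def, mul_comm, Complex.mul_conj]
    have habsc : ‖c‖ = Real.sqrt ε := by
      rw [hcdef]
      rw [norm_div, norm_mul, Complex.norm_of_nonneg (Real.sqrt_nonneg ε),
        Complex.norm_of_nonneg (norm_nonneg z)]
      field_simp
    have : Complex.normSq c = ε := by
      rw [← Complex.sq_norm, habsc, Real.sq_sqrt hε0.le]
    rw [this]
  -- orthogonality
  have hoψφ : star ψ ⬝ᵥ φp = 0 := by
    have h := dot_adjoint P ψ φp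
    rw [hPψ, hP.eq, hPφ, dotProduct_zero] at h
    exact h
  have hoφψ : star φp ⬝ᵥ ψ = 0 := by
    have h := dot_adjoint P φp ψ
    rw [hPφ, hP.eq, hPψ] at h
    simpa using h.symm
  set φ : Fin d → ℂ := (a:ℂ) • ψ + c • φp with hφdef
  have hexp : ∀ M : Matrix (Fin d) (Fin d) ℂ, star φ ⬝ᵥ (M *ᵥ φ) =
      (a:ℂ)^2 * (star ψ ⬝ᵥ (M *ᵥ ψ)) + (a:ℂ) * c * (star ψ ⬝ᵥ (M *ᵥ φp))
      + (a:ℂ) * star c * (star φp ⬝ᵥ (M *ᵥ ψ)) + star c * c * (star φp ⬝ᵥ (M *ᵥ φp)) := by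
    intro M
    simp only [hφdef, star_add, star_smul, mulVec_add, mulVec_smul, add_dotProduct,
      dotProduct_add, smul_dotProduct, dotProduct_smul, smul_eq_mul, star_trivial,
      Complex.star_def, Complex.conj_ofReal]
    ring
  have hψφdot : star φ ⬝ᵥ ψ = (a:ℂ) := by
    simp only [hφdef, star_add, star_smul, add_dotProduct, smul_dotProduct, smul_eq_mul,
      Complex.star_def, Complex.conj_ofReal, hψ1, hoφψ]
    ring
  have hφ1' : star φ ⬝ᵥ φ = 1 := by
    have h := hexp 1
    simp only [Matrix.one_mulVec] at h
    rw [h, hψ1, hφ1, hoψφ, hoφψ, hcc, ha2]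
    push_cast
    ring
  set ρ : Matrix (Fin d) (Fin d) ℂ := vecMulVec ψ (star ψ) with hρdef
  set σ : Matrix (Fin d) (Fin d) ℂ := vecMulVec φ (star φ) with hσdef
  have hρdens : IsDensity ρ := by
    refine ⟨vecMulVec_posSemidef ψ, ?_⟩
    rw [hρdef, trace_vecMulVec, dotProduct_comm, hψ1]
  have hσdens : IsDensity σ := by
    refine ⟨vecMulVec_posSemidef φ, ?_⟩
    rw [hσdef, trace_vecMulVec, dotProduct_comm, hφ1']
  have hPρ : P * ρ = ρ := by rw [hρdef, mul_vecMulVec, hPψ]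
  have hPφvec : P *ᵥ φ = (a:ℂ) • ψ := by
    simp [hφdef, mulVec_add, mulVec_smul, hPψ, hPφ]
  have hσP : (σ * P).trace.re ≤ 1 - ε := by
    rw [hσdef, trace_vecMulVec_mul, hPφvec, dotProduct_smul, smul_eq_mul, hψφdot,
      ← Complex.ofReal_mul, Complex.ofReal_re, Real.mul_self_sqrt hε1'.le]
  -- the trace inequality
  have hzconj : star ψ ⬝ᵥ (Ω *ᵥ φp) = star z := by
    calc star ψ ⬝ᵥ (Ω *ᵥ φp) = star (Ω *ᵥ ψ) ⬝ᵥ φp := by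
          rw [dot_adjoint, hΩ.1.1.eq]
      _ = star (star φp ⬝ᵥ (Ω *ᵥ ψ)) := Matrix.star_dotProduct _ _
      _ = star z := by rw [hzdef]
  have htrρ : (Ω * ρ).trace = star ψ ⬝ᵥ (Ω *ᵥ ψ) := trace_mul_vecMulVec Ω ψ (star ψ)
  have htrσ : (Ω * σ).trace = star φ ⬝ᵥ (Ω *ᵥ φ) := trace_mul_vecMulVec Ω φ (star φ)
  have hcross : (a:ℂ) * c * star z + (a:ℂ) * star c * z
      = ((2 * a * (Real.sqrt ε * ‖z‖) : ℝ) : ℂ) := by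
    have h2 : star c * z = ((Real.sqrt ε * ‖z‖ : ℝ) : ℂ) := by
      calc star c * z = star (c * star z) := by rw [_root_.star_mul', star_star]
      _ = _ := by rw [hcz, Complex.star_def, Complex.conj_ofReal]
    rw [mul_assoc, mul_assoc, hcz, h2]
    push_cast
    ring
  have htr : (Ω * (ρ - σ)).trace = ((ε:ℝ):ℂ) * (star ψ ⬝ᵥ (Ω *ᵥ ψ))
      - ((ε:ℝ):ℂ) * (star φp ⬝ᵥ (Ω *ᵥ φp))
      - ((2 * a * (Real.sqrt ε * ‖z‖) : ℝ) : ℂ) := by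
    rw [Matrix.mul_sub, Matrix.trace_sub, htrρ, htrσ, hexp Ω, hzconj, ← hzdef, ha2, hcc]
    have := hcross
    push_cast at this ⊢
    linear_combination -this
  have hmain := hmin ρ σ hρdens hPρ hσdens hσP
  rw [htr] at hmain
  simp only [Complex.sub_re, Complex.mul_re, Complex.ofReal_re, Complex.ofReal_im,
    zero_mul, sub_zero] at hmain
  -- bounds on diagonal terms
  have haC : (star ψ ⬝ᵥ (Ω *ᵥ ψ)).re ≤ 1 := by
    have h := hΩ.2.dotProduct_mulVec_nonneg ψ
    rw [Matrix.sub_mulVec, dotProduct_sub, Matrix.one_mulVec, hψ1] at h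
    rw [Complex.le_def] at h
    simp only [Complex.zero_re, Complex.sub_re, Complex.one_re] at h
    linarith [h.1]
  have hbC : 0 ≤ (star φp ⬝ᵥ (Ω *ᵥ φp)).re := by
    have h := hΩ.1.dotProduct_mulVec_nonneg φp
    rw [Complex.le_def] at h
    simpa using h.1
  have hsqε : 0 < Real.sqrt ε := Real.sqrt_pos.mpr hε0
  have hkey : 2 * a * (Real.sqrt ε * ‖z‖) ≤ ε * (1 - s) := by nlinarith
  have hεsq : ε = Real.sqrt ε * Real.sqrt ε := (Real.mul_self_sqrt hε0.le).symm
  have hsqrtdiv : Real.sqrt (ε / (1 - ε)) = Real.sqrt ε / a := by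
    rw [hadef, Real.sqrt_div hε0.le]
  rw [hsqrtdiv, show (1 - s) / 2 * (Real.sqrt ε / a) = ((1 - s) / 2 * Real.sqrt ε) / a by ring,
    le_div_iff₀ ha0]
  nlinarith [hkey, hεsq, hsqε, mul_pos hsqε ha0]

lemma le_of_sq_le_mul {a b : ℝ} (ha : 0 ≤ a) (hb : 0 ≤ b) (h : a ^ 2 ≤ b * a) : a ≤ b := by
  rcases eq_or_lt_of_le ha with h0 | h0
  · rw [← h0]; exact hb
  · nlinarith

lemma key_scaled (P Ω : Matrix (Fin d) (Fin d) ℂ)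
    (hP : P.IsHermitian) (hΩ : IsPOVMElem Ω) (s ε : ℝ)
    (hs : s ∈ Set.Ioo (0:ℝ) 1) (hε : ε ∈ Set.Ioo (0:ℝ) 1)
    (hmin : ∀ ρ σ : Matrix (Fin d) (Fin d) ℂ, IsDensity ρ → P * ρ = ρ →
      IsDensity σ → (σ * P).trace.re ≤ 1 - ε → ε * s < (Ω * (ρ - σ)).trace.re)
    (u w : Fin d → ℂ) (hw : P *ᵥ w = w) (hu : P *ᵥ u = 0) :
    ‖star u ⬝ᵥ (Ω *ᵥ w)‖ ≤ ((1 - s) / 2) * Real.sqrt (ε / (1 - ε)) *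
      (‖(WithLp.equiv 2 (Fin d → ℂ)).symm u‖ * ‖(WithLp.equiv 2 (Fin d → ℂ)).symm w‖) := by
  have hC0 : (0:ℝ) ≤ ((1 - s) / 2) * Real.sqrt (ε / (1 - ε)) :=
    mul_nonneg (by linarith [hs.2]) (Real.sqrt_nonneg _)
  by_cases hu0 : u = 0
  · simp only [hu0, star_zero, zero_dotProduct, norm_zero]
    exact mul_nonneg hC0 (mul_nonneg (norm_nonneg _) (norm_nonneg _))
  by_cases hw0 : w = 0
  · simp only [hw0, Matrix.mulVec_zero, dotProduct_zero, norm_zero]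
    exact mul_nonneg hC0 (mul_nonneg (norm_nonneg _) (norm_nonneg _))
  set nu : ℝ := ‖(WithLp.equiv 2 (Fin d → ℂ)).symm u‖ with hnudef
  set nw : ℝ := ‖(WithLp.equiv 2 (Fin d → ℂ)).symm w‖ with hnwdef
  have hu0' : (WithLp.equiv 2 (Fin d → ℂ)).symm u ≠ 0 := by
    intro h
    exact hu0 (by simpa using congrArg (WithLp.equiv 2 (Fin d → ℂ)) h)
  have hw0' : (WithLp.equiv 2 (Fin d → ℂ)).symm w ≠ 0 := by
    intro h
    exact hw0 (by simpa using congrArg (WithLp.equiv 2 (Fin d → ℂ)) h)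
  have hnu : 0 < nu := norm_pos_iff.mpr hu0'
  have hnw : 0 < nw := norm_pos_iff.mpr hw0'
  set ψ : Fin d → ℂ := ((nw⁻¹ : ℝ) : ℂ) • w with hψdef
  set φp : Fin d → ℂ := ((nu⁻¹ : ℝ) : ℂ) • u with hφpdef
  have hψ1 : star ψ ⬝ᵥ ψ = 1 := by
    rw [hψdef, star_smul, smul_dotProduct, dotProduct_smul, dot_star_self_eq w, ← hnwdef]
    simp only [smul_eq_mul, Complex.star_def, Complex.conj_ofReal]
    rw [← Complex.ofReal_pow, ← Complex.ofReal_mul, ← Complex.ofReal_mul, ← Complex.ofReal_one]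
    congr 1
    field_simp
  have hφp1 : star φp ⬝ᵥ φp = 1 := by
    rw [hφpdef, star_smul, smul_dotProduct, dotProduct_smul, dot_star_self_eq u, ← hnudef]
    simp only [smul_eq_mul, Complex.star_def, Complex.conj_ofReal]
    rw [← Complex.ofReal_pow, ← Complex.ofReal_mul, ← Complex.ofReal_mul, ← Complex.ofReal_one]
    congr 1
    field_simp
  have hPψ : P *ᵥ ψ = ψ := by rw [hψdef, mulVec_smul, hw]
  have hPφp : P *ᵥ φp = 0 := by rw [hφpdef, mulVec_smul, hu, smul_zero]
  have hkey := key_unit P Ω hP hΩ s ε hs hε hmin ψ φp hψ1 hφp1 hPψ hPφp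
  have hdot : star φp ⬝ᵥ (Ω *ᵥ ψ) = ((nu⁻¹ * nw⁻¹ : ℝ) : ℂ) * (star u ⬝ᵥ (Ω *ᵥ w)) := by
    rw [hφpdef, hψdef, star_smul, smul_dotProduct, mulVec_smul, dotProduct_smul]
    simp only [smul_eq_mul, Complex.star_def, Complex.conj_ofReal]
    push_cast
    ring
  rw [hdot] at hkey
  rw [norm_mul, Complex.norm_of_nonneg (by positivity)] at hkey
  have h2 : ‖star u ⬝ᵥ (Ω *ᵥ w)‖ ≤
      ((1 - s) / 2) * Real.sqrt (ε / (1 - ε)) * (nu * nw) := by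
    rw [← mul_le_mul_iff_right₀ (show (0:ℝ) < nu⁻¹ * nw⁻¹ by positivity)]
    calc nu⁻¹ * nw⁻¹ * ‖star u ⬝ᵥ (Ω *ᵥ w)‖ ≤
        ((1 - s) / 2) * Real.sqrt (ε / (1 - ε)) := hkey
      _ = nu⁻¹ * nw⁻¹ * (((1 - s) / 2) * Real.sqrt (ε / (1 - ε)) * (nu * nw)) := by
          field_simp
  exact h2

/-- second part of Lemma 1: the off-diagonal block
Δ₁ = (I − Π_V) Ω Π_V satisfies ‖Δ₁‖_∞ < (1/2)√(ε/(1−ε)). -/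
theorem deviation_lemma_offdiag (P Ω : Matrix (Fin d) (Fin d) ℂ)
    (hP : P.IsHermitian) (hP2 : P * P = P) (hP0 : P ≠ 0) (hP1 : P ≠ 1)
    (hΩ : IsPOVMElem Ω) (s ε : ℝ) (hs : s ∈ Set.Ioo (0 : ℝ) 1) (hε : ε ∈ Set.Ioo (0 : ℝ) 1)
    (hmin : ∀ ρ σ : Matrix (Fin d) (Fin d) ℂ, IsDensity ρ → P * ρ = ρ →
      IsDensity σ → (σ * P).trace.re ≤ 1 - ε → ε * s < (Ω * (ρ - σ)).trace.re) :
    opNorm ((1 - P) * Ω * P) < (1 / 2) * Real.sqrt (ε / (1 - ε)) := by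
  obtain ⟨hs0, hs1⟩ := hs
  obtain ⟨hε0, hε1⟩ := hε
  set C : ℝ := ((1 - s) / 2) * Real.sqrt (ε / (1 - ε)) with hCdef
  have hsqrtpos : 0 < Real.sqrt (ε / (1 - ε)) :=
    Real.sqrt_pos.mpr (div_pos hε0 (by linarith))
  have hC0 : 0 ≤ C := mul_nonneg (by linarith) (Real.sqrt_nonneg _)
  have hlt : C < (1 / 2) * Real.sqrt (ε / (1 - ε)) := by
    rw [hCdef]
    exact mul_lt_mul_of_pos_right (by linarith) hsqrtpos
  refine lt_of_le_of_lt ?_ hlt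
  show ‖Matrix.toEuclideanCLM (n := Fin d) (𝕜 := ℂ) ((1 - P) * Ω * P)‖ ≤ C
  apply ContinuousLinearMap.opNorm_le_bound _ hC0
  intro x
  set x' : Fin d → ℂ := WithLp.equiv 2 (Fin d → ℂ) x with hx'def
  have hx : x = (WithLp.equiv 2 (Fin d → ℂ)).symm x' := by simp [hx'def]
  set Δ : Matrix (Fin d) (Fin d) ℂ := (1 - P) * Ω * P with hΔdef
  have happ : Matrix.toEuclideanCLM (𝕜 := ℂ) Δ x
      = (WithLp.equiv 2 (Fin d → ℂ)).symm (Δ *ᵥ x') := by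
    rw [hx]; exact Matrix.toEuclideanCLM_toLp Δ x'
  set u : Fin d → ℂ := Δ *ᵥ x' with hudef
  set w : Fin d → ℂ := P *ᵥ x' with hwdef
  have hPw : P *ᵥ w = w := by rw [hwdef, Matrix.mulVec_mulVec, hP2]
  have hPΔ : P * Δ = 0 := by
    have h0 : P * (1 - P) = 0 := by rw [mul_sub, mul_one, hP2, sub_self]
    rw [hΔdef, ← mul_assoc, ← mul_assoc, h0, zero_mul, zero_mul]
  have hPu : P *ᵥ u = 0 := by
    rw [hudef, Matrix.mulVec_mulVec, hPΔ, Matrix.zero_mulVec]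
  have hu_eq : u = (1 - P) *ᵥ (Ω *ᵥ w) := by
    rw [hudef, hwdef, Matrix.mulVec_mulVec, Matrix.mulVec_mulVec, hΔdef]
  have h1P : ((1 : Matrix (Fin d) (Fin d) ℂ) - P)ᴴ = 1 - P := by
    rw [Matrix.conjTranspose_sub, Matrix.conjTranspose_one, hP.eq]
  have h1Pu : (1 - P) *ᵥ u = u := by
    rw [Matrix.sub_mulVec, Matrix.one_mulVec, hPu, sub_zero]
  have hself : star u ⬝ᵥ (Ω *ᵥ w) = star u ⬝ᵥ u := by
    have h3 := dot_adjoint (1 - P) u (Ω *ᵥ w)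
    rw [h1Pu, h1P, ← hu_eq] at h3
    exact h3
  have hkey := key_scaled P Ω hP hΩ s ε ⟨hs0, hs1⟩ ⟨hε0, hε1⟩ hmin u w hPw hPu
  set nu : ℝ := ‖(WithLp.equiv 2 (Fin d → ℂ)).symm u‖ with hnudef
  set nw : ℝ := ‖(WithLp.equiv 2 (Fin d → ℂ)).symm w‖ with hnwdef
  -- ‖w‖ ≤ ‖x‖
  have hw_self : star w ⬝ᵥ w = star x' ⬝ᵥ w := by
    have h4 := dot_adjoint P x' w
    rw [hP.eq, hPw, ← hwdef] at h4
    exact h4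
  have hwx : nw ≤ ‖x‖ := by
    apply le_of_sq_le_mul (norm_nonneg _) (norm_nonneg _)
    have h5 : (nw : ℝ) ^ 2 = (star w ⬝ᵥ w).re := by
      rw [dot_star_self_eq w, ← hnwdef, ← Complex.ofReal_pow, Complex.ofReal_re]
    rw [h5, hw_self]
    have h6 : star x' ⬝ᵥ w
        = inner (𝕜 := ℂ) x ((WithLp.equiv 2 (Fin d → ℂ)).symm w) := by
      rw [hx]; exact dotProduct_comm _ _
    rw [h6]
    calc (inner (𝕜 := ℂ) x ((WithLp.equiv 2 (Fin d → ℂ)).symm w)).re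
        ≤ ‖inner (𝕜 := ℂ) x ((WithLp.equiv 2 (Fin d → ℂ)).symm w)‖ :=
          Complex.re_le_norm _
      _ ≤ ‖x‖ * nw := by
          rw [hnwdef]
          exact norm_inner_le_norm _ _
  -- ‖u‖ ≤ C ‖x‖
  have hnorm : ‖Matrix.toEuclideanCLM (𝕜 := ℂ) Δ x‖ = nu := by rw [happ, hnudef]
  rw [hnorm]
  apply le_of_sq_le_mul (norm_nonneg _) (by positivity)
  have h7 : (nu : ℝ) ^ 2 = (star u ⬝ᵥ u).re := by
    rw [dot_star_self_eq u, ← hnudef, ← Complex.ofReal_pow, Complex.ofReal_re]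
  rw [h7, ← hself]
  calc (star u ⬝ᵥ (Ω *ᵥ w)).re ≤ ‖star u ⬝ᵥ (Ω *ᵥ w)‖ := Complex.re_le_norm _
    _ ≤ C * (nu * nw) := hkey
    _ ≤ C * ‖x‖ * nu := by
        have hnu0 : 0 ≤ nu := hnudef ▸ norm_nonneg _
        have h8 := mul_le_mul_of_nonneg_left hwx hC0
        nlinarith


end QSVQDH
end
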